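/- arXiv:2003.01086 — 2 statements merged into one kernel-verified Lean document; each statement's English description precedes it below -/
import Mathlib

section
/- Let X, Y, A, B be nonempty finite types, let p be a strictly positive probability mass function on X × Y, and let e : X → A and f : Y → B. Let r(a|b) be the conditional pmf of a = e(x) given b = f(y) under the pushforward of p, and define the model q(y|x) = p_Y(y)·r(e(x)|f(y)) / Σ_{y'} p_Y(y')·r(e(x)|f(y')). Then the expected log-likelihood satisfies Σ_{x,y} p(x,y) · log q(y|x) = −H(Y) + I(e(X); f(Y)). -/
/-!
Statement 1: For a strictly positive pmf `p` on `X × Y`, maps `e : X → A` and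
`f : Y → B`, with `r(a|b)` the conditional pmf of `a = e x` given `b = f y`
under the pushforward of `p`, the model
`q(y|x) = p_Y(y)·r(e x | f y) / ∑_{y'} p_Y(y')·r(e x | f y')` satisfies
`∑_{x,y} p(x,y) · log q(y|x) = −H(Y) + I(e(X); f(Y))`.
-/

open Finset
open scoped Classical

noncomputable section

variable {X Y A B : Type*} [Fintype X] [Fintype Y] [Fintype A] [Fintype B]

/-- Marginal of the second coordinate. -/
def margY (p : X × Y → ℝ) (y : Y) : ℝ := ∑ x, p (x, y)

/-- Entropy of the second coordinate. -/
def entY (p : X × Y → ℝ) : ℝ := -∑ y, margY p y * Real.log (margY p y)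

/-- Mutual information between the two coordinates of a pmf on a product of
finite types (terms with zero mass contribute `0`, since `Real.log 0 = 0`). -/
def mutualInfo (p : X × Y → ℝ) : ℝ :=
  ∑ x, ∑ y, p (x, y) * Real.log (p (x, y) / ((∑ y', p (x, y')) * (∑ x', p (x', y))))

/-- Pushforward pmf of `p` under `(x, y) ↦ (e x, f y)`. -/
def pushPmf (p : X × Y → ℝ) (e : X → A) (f : Y → B) : A × B → ℝ :=
  fun ab => ∑ x, ∑ y, if e x = ab.1 ∧ f y = ab.2 then p (x, y) else 0

/-- Conditional pmf of `a = e x` given `b = f y` under the pushforward of `p`. -/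
def condPush (p : X × Y → ℝ) (e : X → A) (f : Y → B) (a : A) (b : B) : ℝ :=
  pushPmf p e f (a, b) / ∑ a', pushPmf p e f (a', b)

/-- The model `q(y|x) ∝ p_Y(y)·r(e x | f y)`. -/
def qOpt (p : X × Y → ℝ) (e : X → A) (f : Y → B) (y : Y) (x : X) : ℝ :=
  margY p y * condPush p e f (e x) (f y) /
    ∑ y', margY p y' * condPush p e f (e x) (f y')

set_option linter.unusedSectionVars false

lemma sum_comm4 (g : A → B → X → Y → ℝ) :
    ∑ a, ∑ b, ∑ x, ∑ y, g a b x y = ∑ x, ∑ y, ∑ a, ∑ b, g a b x y := by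
  calc ∑ a, ∑ b, ∑ x, ∑ y, g a b x y
      = ∑ a, ∑ x, ∑ b, ∑ y, g a b x y :=
        Finset.sum_congr rfl fun a _ => Finset.sum_comm
    _ = ∑ x, ∑ a, ∑ b, ∑ y, g a b x y := Finset.sum_comm
    _ = ∑ x, ∑ a, ∑ y, ∑ b, g a b x y :=
        Finset.sum_congr rfl fun x _ => Finset.sum_congr rfl fun a _ => Finset.sum_comm
    _ = ∑ x, ∑ y, ∑ a, ∑ b, g a b x y :=
        Finset.sum_congr rfl fun x _ => Finset.sum_comm

lemma pushPmf_nonneg (p : X × Y → ℝ) (hnn : ∀ xy, 0 ≤ p xy) (e : X → A) (f : Y → B)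
    (ab : A × B) : 0 ≤ pushPmf p e f ab := by
  refine Finset.sum_nonneg fun x _ => Finset.sum_nonneg fun y _ => ?_
  split <;> simp [hnn]

lemma pushPmf_ge (p : X × Y → ℝ) (hnn : ∀ xy, 0 ≤ p xy) (e : X → A) (f : Y → B)
    (x : X) (y : Y) : p (x, y) ≤ pushPmf p e f (e x, f y) := by
  have h1 : (if e x = e x ∧ f y = f y then p (x, y) else 0)
      ≤ ∑ y', if e x = e x ∧ f y' = f y then p (x, y') else 0 := by
    refine Finset.single_le_sum (f := fun y' => if e x = e x ∧ f y' = f y then p (x, y') else 0)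
      (fun y' _ => ?_) (mem_univ y)
    split <;> simp [hnn]
  have h2 : (∑ y', if e x = e x ∧ f y' = f y then p (x, y') else 0)
      ≤ ∑ x', ∑ y', if e x' = e x ∧ f y' = f y then p (x', y') else 0 := by
    refine Finset.single_le_sum
      (f := fun x' => ∑ y', if e x' = e x ∧ f y' = f y then p (x', y') else 0)
      (fun x' _ => Finset.sum_nonneg fun y' _ => ?_) (mem_univ x)
    split <;> simp [hnn]
  simpa [pushPmf] using le_trans (by simpa using h1) h2

/-- grouping lemma -/
lemma sum_push_mul (p : X × Y → ℝ) (e : X → A) (f : Y → B) (g : A → B → ℝ) :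
    ∑ a, ∑ b, pushPmf p e f (a, b) * g a b = ∑ x, ∑ y, p (x, y) * g (e x) (f y) := by
  have h1 : ∀ a b, pushPmf p e f (a, b) * g a b
      = ∑ x, ∑ y, (if e x = a ∧ f y = b then p (x, y) * g a b else 0) := by
    intro a b
    simp [pushPmf, Finset.sum_mul, ite_mul]
  simp only [h1]
  rw [sum_comm4]
  refine Finset.sum_congr rfl fun x _ => Finset.sum_congr rfl fun y _ => ?_
  simp [ite_and, Finset.sum_ite_eq]

lemma margPush (p : X × Y → ℝ) (e : X → A) (f : Y → B) (b : B) :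
    ∑ a, pushPmf p e f (a, b) = ∑ y, if f y = b then margY p y else 0 := by
  simp only [pushPmf, margY, ite_and]
  rw [Finset.sum_comm]
  have h1 : ∀ x : X, (∑ a, ∑ y, if e x = a then if f y = b then p (x, y) else 0 else 0)
      = ∑ y, if f y = b then p (x, y) else 0 := by
    intro x
    rw [Finset.sum_comm]
    simp [Finset.sum_ite_eq]
  simp only [h1]
  rw [Finset.sum_comm]
  refine Finset.sum_congr rfl fun y _ => ?_
  split <;> simp

lemma sum_fiber_Y (f : Y → B) (m : Y → ℝ) (h : B → ℝ) :
    ∑ y, m y * h (f y) = ∑ b, (∑ y, if f y = b then m y else 0) * h b := by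
  simp only [Finset.sum_mul, ite_mul, zero_mul]
  rw [Finset.sum_comm]
  refine Finset.sum_congr rfl fun y _ => ?_
  simp [Finset.sum_ite_eq]

lemma denom_eq (p : X × Y → ℝ) (hnn : ∀ xy, 0 ≤ p xy) (e : X → A) (f : Y → B) (a : A) :
    ∑ y', margY p y' * condPush p e f a (f y') = ∑ b, pushPmf p e f (a, b) := by
  rw [sum_fiber_Y f (margY p) (fun b => condPush p e f a b)]
  refine Finset.sum_congr rfl fun b _ => ?_
  rw [← margPush p e f b]
  unfold condPush
  rcases eq_or_ne (∑ a', pushPmf p e f (a', b)) 0 with hS | hS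
  · have hle : pushPmf p e f (a, b) ≤ ∑ a', pushPmf p e f (a', b) :=
      Finset.single_le_sum (f := fun a' => pushPmf p e f (a', b))
        (fun a' _ => pushPmf_nonneg p hnn e f _) (mem_univ a)
    have h0 : pushPmf p e f (a, b) = 0 :=
      le_antisymm (hS ▸ hle) (pushPmf_nonneg p hnn e f _)
    simp [hS, h0]
  · field_simp

theorem expected_loglik_eq_neg_entropy_add_mutual_info
    [Nonempty X] [Nonempty Y] [Nonempty A] [Nonempty B]
    (p : X × Y → ℝ) (hpos : ∀ xy, 0 < p xy) (hsum : ∑ xy, p xy = 1)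
    (e : X → A) (f : Y → B) :
    ∑ x, ∑ y, p (x, y) * Real.log (qOpt p e f y x)
      = -entY p + mutualInfo (pushPmf p e f) := by
  classical
  have hnn : ∀ xy, 0 ≤ p xy := fun xy => (hpos xy).le
  have hπpos : ∀ x y, 0 < pushPmf p e f (e x, f y) :=
    fun x y => lt_of_lt_of_le (hpos _) (pushPmf_ge p hnn e f x y)
  have hSpos : ∀ y : Y, 0 < ∑ a, pushPmf p e f (a, f y) := by
    intro y
    obtain ⟨x⟩ := ‹Nonempty X›
    exact lt_of_lt_of_le (hπpos x y)
      (Finset.single_le_sum (f := fun a => pushPmf p e f (a, f y))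
        (fun a _ => pushPmf_nonneg p hnn e f _) (mem_univ _))
  have hTpos : ∀ x : X, 0 < ∑ b, pushPmf p e f (e x, b) := by
    intro x
    obtain ⟨y⟩ := ‹Nonempty Y›
    exact lt_of_lt_of_le (hπpos x y)
      (Finset.single_le_sum (f := fun b => pushPmf p e f (e x, b))
        (fun b _ => pushPmf_nonneg p hnn e f _) (mem_univ _))
  have hmpos : ∀ y, 0 < margY p y :=
    fun y => Finset.sum_pos (fun x _ => hpos _) Finset.univ_nonempty
  have key : ∀ x y, Real.log (qOpt p e f y x)
      = Real.log (margY p y)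
        + Real.log (pushPmf p e f (e x, f y) /
            ((∑ b', pushPmf p e f (e x, b')) * (∑ a', pushPmf p e f (a', f y)))) := by
    intro x y
    have hT := (hTpos x).ne'
    have hS := (hSpos y).ne'
    have hq : qOpt p e f y x
        = margY p y * (pushPmf p e f (e x, f y) /
            ((∑ b', pushPmf p e f (e x, b')) * (∑ a', pushPmf p e f (a', f y)))) := by
      unfold qOpt
      rw [denom_eq p hnn e f (e x)]
      unfold condPush
      field_simp
    rw [hq, Real.log_mul (hmpos y).ne'
      (div_pos (hπpos x y) (mul_pos (hTpos x) (hSpos y))).ne']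
  have step1 : ∑ x, ∑ y, p (x, y) * Real.log (qOpt p e f y x)
      = (∑ x, ∑ y, p (x, y) * Real.log (margY p y))
        + ∑ x, ∑ y, p (x, y) * Real.log (pushPmf p e f (e x, f y) /
            ((∑ b', pushPmf p e f (e x, b')) * (∑ a', pushPmf p e f (a', f y)))) := by
    rw [← Finset.sum_add_distrib]
    refine Finset.sum_congr rfl fun x _ => ?_
    rw [← Finset.sum_add_distrib]
    refine Finset.sum_congr rfl fun y _ => ?_
    rw [key x y, mul_add]
  have step2 : ∑ x, ∑ y, p (x, y) * Real.log (margY p y) = -entY p := by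
    rw [Finset.sum_comm]
    simp only [entY, neg_neg]
    refine Finset.sum_congr rfl fun y _ => ?_
    rw [← Finset.sum_mul]
    rfl
  have step3 : ∑ x, ∑ y, p (x, y) * Real.log (pushPmf p e f (e x, f y) /
        ((∑ b', pushPmf p e f (e x, b')) * (∑ a', pushPmf p e f (a', f y))))
      = mutualInfo (pushPmf p e f) := by
    rw [← sum_push_mul p e f (fun a b => Real.log (pushPmf p e f (a, b) /
        ((∑ b', pushPmf p e f (a, b')) * (∑ a', pushPmf p e f (a', b)))))]
    rfl
  rw [step1, step2, step3]


end
end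

section
/- (Lemma 1.) Let Xo, U, Z be nonempty finite types, let p be a strictly positive probability mass function on Xo × Xo × U, whose coordinates represent the triple (X_{t+1}, X_t, U_t), and let Enc : Xo → Z be a (deterministic) encoder. Consider restricted prediction models of the form q_ψ(x'|x,u) = ψ1(x')·ψ2(Enc(x'), Enc(x), u) / Σ_{x''} ψ1(x'')·ψ2(Enc(x''), Enc(x), u), with ψ1 : Xo → ℝ≥0 and ψ2 : Z × Z × U → ℝ≥0 such that the normalizer is positive for every (x,u). Then the predictive suboptimality, i.e., the infimum over all such models of Σ_{x,u} p_{XU}(x,u) · KL(p(·|x,u) ‖ q_ψ(·|x,u)), is at most the mutual information gap I(X_{t+1} ; (X_t, U_t)) − I(Enc(X_{t+1}) ; (Enc(X_t), U_t)). -/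
/-!
Statement 3 (Lemma 1): For a strictly positive pmf `p` on `Xo × Xo × U` whose
coordinates represent `(X_{t+1}, X_t, U_t)` and a deterministic encoder
`Enc : Xo → Z`, the predictive suboptimality — the infimum over restricted
prediction models `q_ψ(x'|x,u) ∝ ψ1(x')·ψ2(Enc x', Enc x, u)` of
`∑_{x,u} p_{XU}(x,u) · KL(p(·|x,u) ‖ q_ψ(·|x,u))` — is at most the mutual
information gap `I(X_{t+1};(X_t,U_t)) − I(Enc(X_{t+1});(Enc(X_t),U_t))`.
-/

open Finset
open scoped Classical

noncomputable section

/-- Mutual information between the two coordinates of a pmf on a product of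
finite types (terms with zero mass contribute `0`, since `Real.log 0 = 0`). -/
def mi {α β : Type*} [Fintype α] [Fintype β] (q : α × β → ℝ) : ℝ :=
  ∑ a, ∑ b, q (a, b) * Real.log (q (a, b) / ((∑ b', q (a, b')) * (∑ a', q (a', b))))

variable {Xo U Z : Type*} [Fintype Xo] [Fintype U] [Fintype Z]

/-- Marginal of the current state-action pair `(x, u)`;
the pmf `p` is on `Xo × Xo × U` with coordinates `(x_{t+1}, x_t, u_t)`. -/
def margXU (p : Xo × Xo × U → ℝ) (xu : Xo × U) : ℝ := ∑ x', p (x', xu)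

/-- Conditional pmf of the next observation `x'` given `(x, u)`. -/
def condNext (p : Xo × Xo × U → ℝ) (x' : Xo) (xu : Xo × U) : ℝ :=
  p (x', xu) / margXU p xu

/-- Pushforward pmf of `p` under `(x', x, u) ↦ (Enc x', Enc x, u)`. -/
def pushEnc (p : Xo × Xo × U → ℝ) (Enc : Xo → Z) : Z × Z × U → ℝ :=
  fun zzu => ∑ x', ∑ x, if Enc x' = zzu.1 ∧ Enc x = zzu.2.1 then p (x', x, zzu.2.2) else 0

/-- The restricted prediction model `q_ψ(x'|x,u)` induced by `ψ1, ψ2`. -/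
def qModel (Enc : Xo → Z) (ψ1 : Xo → ℝ) (ψ2 : Z × Z × U → ℝ)
    (x' : Xo) (xu : Xo × U) : ℝ :=
  ψ1 x' * ψ2 (Enc x', Enc xu.1, xu.2) / ∑ x'', ψ1 x'' * ψ2 (Enc x'', Enc xu.1, xu.2)

/-- Predictive loss `∑_{x,u} p_{XU}(x,u) · KL(p(·|x,u) ‖ q(·|x,u))` of a
conditional model `q x' (x,u) = q(x'|x,u)` under `p`. -/
def predLoss (p : Xo × Xo × U → ℝ) (q : Xo → Xo × U → ℝ) : ℝ :=
  ∑ xu : Xo × U, margXU p xu *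
    ∑ x', condNext p x' xu * Real.log (condNext p x' xu / q x' xu)

namespace L1

variable {Xo U Z : Type*} [Fintype Xo] [Fintype U] [Fintype Z]

lemma pushEnc_eq (p : Xo × Xo × U → ℝ) (Enc : Xo → Z) (s : Z × Z × U) :
    pushEnc p Enc s = ∑ t : Xo × Xo × U,
      if (Enc t.1, Enc t.2.1, t.2.2) = s then p t else 0 := by
  obtain ⟨z', z, u⟩ := s
  rw [Fintype.sum_prod_type]
  unfold pushEnc
  refine Finset.sum_congr rfl fun x' _ => ?_
  rw [Fintype.sum_prod_type]
  refine Finset.sum_congr rfl fun x _ => ?_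
  have h : ∀ u' : U, ((Enc x', Enc x, u') = (z', z, u)) ↔
      (u' = u ∧ (Enc x' = z' ∧ Enc x = z)) := by
    intro u'; simp only [Prod.mk.injEq]; tauto
  simp only [h, ite_and]
  rw [Finset.sum_ite_eq' Finset.univ u
    (fun u' => if Enc x' = z' then if Enc x = z then p (x', x, u') else 0 else 0)]
  simp [ite_and]

lemma push_sum (p : Xo × Xo × U → ℝ) (Enc : Xo → Z) (g : Z × Z × U → ℝ) :
    ∑ s : Z × Z × U, pushEnc p Enc s * g s
      = ∑ t : Xo × Xo × U, p t * g (Enc t.1, Enc t.2.1, t.2.2) := by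
  simp only [pushEnc_eq, Finset.sum_mul, ite_mul, zero_mul]
  rw [Finset.sum_comm]
  refine Finset.sum_congr rfl fun t _ => ?_
  simp [Finset.sum_ite_eq]

lemma fiber_sum {α β : Type*} [Fintype α] [Fintype β] (e : α → β) (w : α → ℝ) (f : β → ℝ) :
    ∑ a, w a * f (e a) = ∑ b, (∑ a, if e a = b then w a else 0) * f b := by
  simp only [Finset.sum_mul, ite_mul, zero_mul]
  rw [Finset.sum_comm]
  refine Finset.sum_congr rfl fun a _ => ?_
  simp [Finset.sum_ite_eq]

lemma Qm_eq (p : Xo × Xo × U → ℝ) (Enc : Xo → Z) (z' : Z) :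
    (∑ b : Z × U, pushEnc p Enc (z', b))
      = ∑ x' : Xo, if Enc x' = z' then (∑ b : Xo × U, p (x', b)) else 0 := by
  simp only [pushEnc_eq]
  rw [Finset.sum_comm]
  have h1 : ∀ t : Xo × Xo × U,
      (∑ b : Z × U, if (Enc t.1, Enc t.2.1, t.2.2) = (z', b) then p t else 0)
        = if Enc t.1 = z' then p t else 0 := by
    intro t
    have h : ∀ b : Z × U, ((Enc t.1, Enc t.2.1, t.2.2) = (z', b)) ↔
        (b = (Enc t.2.1, t.2.2) ∧ Enc t.1 = z') := by
      intro b; simp only [Prod.mk.injEq, Prod.ext_iff]; tauto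
    simp only [h, ite_and]
    rw [Finset.sum_ite_eq' Finset.univ ((Enc t.2.1, t.2.2) : Z × U)
      (fun _ => if Enc t.1 = z' then p t else 0)]
    simp
  simp only [h1]
  rw [Fintype.sum_prod_type]
  refine Finset.sum_congr rfl fun x' _ => ?_
  split <;> simp


set_option linter.unusedSectionVars false

def pm (p : Xo × Xo × U → ℝ) (x' : Xo) : ℝ := ∑ b : Xo × U, p (x', b)

def Qm (p : Xo × Xo × U → ℝ) (Enc : Xo → Z) (z' : Z) : ℝ :=
  ∑ b : Z × U, pushEnc p Enc (z', b)

def QXU (p : Xo × Xo × U → ℝ) (Enc : Xo → Z) (b : Z × U) : ℝ :=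
  ∑ z', pushEnc p Enc (z', b)

def psi2 (p : Xo × Xo × U → ℝ) (Enc : Xo → Z) (s : Z × Z × U) : ℝ :=
  pushEnc p Enc s / (Qm p Enc s.1 * QXU p Enc s.2)

variable {p : Xo × Xo × U → ℝ} {Enc : Xo → Z}

lemma pushEnc_nonneg (hp : ∀ t, 0 ≤ p t) (s : Z × Z × U) : 0 ≤ pushEnc p Enc s := by
  rw [pushEnc_eq]
  exact Finset.sum_nonneg fun t _ => by split <;> simp [hp t]

lemma pushEnc_pos (hp : ∀ t, 0 < p t) (a b : Xo) (u : U) :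
    0 < pushEnc p Enc (Enc a, Enc b, u) := by
  rw [pushEnc_eq]
  have hle : p (a, b, u) ≤ ∑ t : Xo × Xo × U,
      if (Enc t.1, Enc t.2.1, t.2.2) = (Enc a, Enc b, u) then p t else 0 := by
    have := Finset.single_le_sum
      (f := fun t : Xo × Xo × U =>
        if (Enc t.1, Enc t.2.1, t.2.2) = (Enc a, Enc b, u) then p t else 0)
      (fun t _ => by split <;> simp [(hp t).le]) (Finset.mem_univ (a, b, u))
    simpa using this
  exact lt_of_lt_of_le (hp _) hle

lemma pushEnc_le_Qm (hp : ∀ t, 0 ≤ p t) (z' : Z) (b : Z × U) :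
    pushEnc p Enc (z', b) ≤ Qm p Enc z' :=
  Finset.single_le_sum (f := fun b' => pushEnc p Enc (z', b'))
    (fun b' _ => pushEnc_nonneg hp _) (Finset.mem_univ b)

lemma Qm_nonneg (hp : ∀ t, 0 ≤ p t) (z' : Z) : 0 ≤ Qm p Enc z' :=
  Finset.sum_nonneg fun _ _ => pushEnc_nonneg hp _

lemma QXU_nonneg (hp : ∀ t, 0 ≤ p t) (b : Z × U) : 0 ≤ QXU p Enc b :=
  Finset.sum_nonneg fun _ _ => pushEnc_nonneg hp _

lemma Qm_pos [Nonempty Xo] [Nonempty U] (hp : ∀ t, 0 < p t) (a : Xo) :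
    0 < Qm p Enc (Enc a) := by
  obtain ⟨b⟩ := ‹Nonempty Xo›; obtain ⟨u⟩ := ‹Nonempty U›
  exact lt_of_lt_of_le (pushEnc_pos hp a b u)
    (Finset.single_le_sum (f := fun b' : Z × U => pushEnc p Enc (Enc a, b'))
      (fun b' _ => pushEnc_nonneg (fun t => (hp t).le) _) (Finset.mem_univ (Enc b, u)))

lemma QXU_pos [Nonempty Xo] (hp : ∀ t, 0 < p t) (b : Xo) (u : U) :
    0 < QXU p Enc (Enc b, u) := by
  obtain ⟨a⟩ := ‹Nonempty Xo›
  exact lt_of_lt_of_le (pushEnc_pos hp a b u)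
    (Finset.single_le_sum (f := fun z' : Z => pushEnc p Enc (z', Enc b, u))
      (fun z' _ => pushEnc_nonneg (fun t => (hp t).le) _) (Finset.mem_univ (Enc a)))

lemma pm_pos [Nonempty Xo] [Nonempty U] (hp : ∀ t, 0 < p t) (x' : Xo) : 0 < pm p x' :=
  Finset.sum_pos (fun b _ => hp (x', b)) Finset.univ_nonempty

lemma margXU_pos [Nonempty Xo] (hp : ∀ t, 0 < p t) (b : Xo × U) : 0 < margXU p b :=
  Finset.sum_pos (fun x' _ => hp (x', b)) Finset.univ_nonempty

lemma psi2_nonneg (hp : ∀ t, 0 ≤ p t) (s : Z × Z × U) : 0 ≤ psi2 p Enc s :=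
  div_nonneg (pushEnc_nonneg hp s) (mul_nonneg (Qm_nonneg hp _) (QXU_nonneg hp _))

lemma norm_eq_one [Nonempty Xo] [Nonempty U] (hp : ∀ t, 0 < p t) (x : Xo) (u : U) :
    ∑ x'', pm p x'' * psi2 p Enc (Enc x'', Enc x, u) = 1 := by
  rw [fiber_sum Enc (pm p) (fun z' => psi2 p Enc (z', Enc x, u))]
  have h1 : ∀ z' : Z, (∑ a, if Enc a = z' then pm p a else 0) = Qm p Enc z' :=
    fun z' => (Qm_eq p Enc z').symm
  simp only [h1]
  have h2 : ∀ z' : Z, Qm p Enc z' * psi2 p Enc (z', Enc x, u)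
      = pushEnc p Enc (z', Enc x, u) / QXU p Enc (Enc x, u) := by
    intro z'
    rcases eq_or_lt_of_le (Qm_nonneg (fun t => (hp t).le) z' (Enc := Enc)) with h | h
    · have hz : pushEnc p Enc (z', Enc x, u) = 0 :=
        le_antisymm (h ▸ pushEnc_le_Qm (fun t => (hp t).le) z' (Enc x, u))
          (pushEnc_nonneg (fun t => (hp t).le) _)
      simp [← h, hz]
    · unfold psi2
      rw [mul_div_assoc']
      exact mul_div_mul_left _ _ h.ne'
  simp only [h2]
  rw [← Finset.sum_div]
  exact div_self (QXU_pos hp x u).ne'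


lemma predLoss_eq [Nonempty Xo] [Nonempty U] (hp : ∀ t, 0 < p t) :
    predLoss p (qModel Enc (pm p) (psi2 p Enc)) = mi p - mi (pushEnc p Enc) := by
  have hp' : ∀ t, 0 ≤ p t := fun t => (hp t).le
  have hψpos : ∀ (x' x : Xo) (u : U), 0 < psi2 p Enc (Enc x', Enc x, u) := fun x' x u =>
    div_pos (pushEnc_pos hp x' x u) (mul_pos (Qm_pos hp x') (QXU_pos hp x u))
  have hq : ∀ (x' : Xo) (b : Xo × U), qModel Enc (pm p) (psi2 p Enc) x' b
      = pm p x' * psi2 p Enc (Enc x', Enc b.1, b.2) := by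
    intro x' b
    unfold qModel
    rw [norm_eq_one hp b.1 b.2, div_one]
  have step1 : predLoss p (qModel Enc (pm p) (psi2 p Enc))
      = ∑ b : Xo × U, ∑ x',
          p (x', b) * (Real.log (p (x', b) / (pm p x' * margXU p b))
            - Real.log (psi2 p Enc (Enc x', Enc b.1, b.2))) := by
    unfold predLoss
    refine Finset.sum_congr rfl fun b _ => ?_
    rw [Finset.mul_sum]
    refine Finset.sum_congr rfl fun x' _ => ?_
    have hm := margXU_pos hp b
    have harg : condNext p x' b / qModel Enc (pm p) (psi2 p Enc) x' b
        = p (x', b) / (pm p x' * margXU p b) / psi2 p Enc (Enc x', Enc b.1, b.2) := by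
      rw [hq, condNext, div_div, div_div]
      congr 1
      ring
    rw [harg, Real.log_div
        (div_pos (hp _) (mul_pos (pm_pos hp x') hm)).ne'
        (hψpos x' b.1 b.2).ne']
    rw [condNext, ← mul_assoc, mul_div_assoc', mul_div_cancel_left₀ _ hm.ne']
  rw [step1]
  simp only [mul_sub, Finset.sum_sub_distrib]
  congr 1
  · rw [Finset.sum_comm]
    simp only [mi, pm, margXU]
  · have e1 : (∑ t : Xo × Xo × U, p t * Real.log (psi2 p Enc (Enc t.1, Enc t.2.1, t.2.2)))
        = ∑ y : Xo, ∑ x : Xo × U, p (y, x) * Real.log (psi2 p Enc (Enc y, Enc x.1, x.2)) := by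
      rw [Fintype.sum_prod_type]
    have e2 : (∑ s : Z × Z × U, pushEnc p Enc s * Real.log (psi2 p Enc s))
        = mi (pushEnc p Enc) := by
      rw [Fintype.sum_prod_type]
      unfold mi psi2 Qm QXU
      rfl
    rw [Finset.sum_comm, ← e1, ← push_sum p Enc (fun s => Real.log (psi2 p Enc s)), e2]


lemma term_lb {c q : ℝ} (hc : 0 < c) (hq0 : 0 ≤ q) (hq1 : q ≤ 1) :
    -1 ≤ c * Real.log (c / q) := by
  rcases eq_or_lt_of_le hq0 with h | h
  · simp [← h]
  · have hcq : c ≤ c / q := by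
      rw [le_div_iff₀ h]; nlinarith
    have h1 : Real.log c ≤ Real.log (c / q) := Real.log_le_log hc hcq
    have h2 : 1 - 1 / c ≤ Real.log c := by
      have h3 := Real.log_le_sub_one_of_pos (show (0:ℝ) < 1 / c by positivity)
      rw [one_div, Real.log_inv] at h3
      rw [one_div]
      linarith
    have h4 := mul_le_mul_of_nonneg_left (le_trans h2 h1) hc.le
    have h5 : c * (1 - 1 / c) = c - 1 := by field_simp
    nlinarith

lemma sum_margXU (hsum : ∑ t, p t = 1) : ∑ b : Xo × U, margXU p b = 1 := by
  unfold margXU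
  rw [Finset.sum_comm, ← Fintype.sum_prod_type]
  exact hsum

lemma predLoss_lb [Nonempty Xo] (hp : ∀ t, 0 < p t) (hsum : ∑ t, p t = 1)
    (q : Xo → Xo × U → ℝ) (hq0 : ∀ x' b, 0 ≤ q x' b) (hq1 : ∀ x' b, q x' b ≤ 1) :
    -(Fintype.card Xo : ℝ) ≤ predLoss p q := by
  have hinner : ∀ b : Xo × U, -(Fintype.card Xo : ℝ)
      ≤ ∑ x', condNext p x' b * Real.log (condNext p x' b / q x' b) := by
    intro b
    have := Finset.sum_le_sum (s := (Finset.univ : Finset Xo))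
      (f := fun _ => (-1 : ℝ))
      (g := fun x' => condNext p x' b * Real.log (condNext p x' b / q x' b))
      (fun x' _ => term_lb (div_pos (hp _) (margXU_pos hp b)) (hq0 x' b) (hq1 x' b))
    simpa using this
  calc -(Fintype.card Xo : ℝ)
      = ∑ b : Xo × U, margXU p b * (-(Fintype.card Xo : ℝ)) := by
        rw [← Finset.sum_mul, sum_margXU hsum, one_mul]
    _ ≤ predLoss p q := by
        refine Finset.sum_le_sum fun b _ => ?_
        exact mul_le_mul_of_nonneg_left (hinner b) (margXU_pos hp b).le

lemma qModel_nonneg {ψ1 : Xo → ℝ} {ψ2 : Z × Z × U → ℝ}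
    (h1 : ∀ x', 0 ≤ ψ1 x') (h2 : ∀ s, 0 ≤ ψ2 s)
    (hN : ∀ b : Xo × U, 0 < ∑ x'', ψ1 x'' * ψ2 (Enc x'', Enc b.1, b.2))
    (x' : Xo) (b : Xo × U) : 0 ≤ qModel Enc ψ1 ψ2 x' b :=
  div_nonneg (mul_nonneg (h1 _) (h2 _)) (hN b).le

lemma qModel_le_one {ψ1 : Xo → ℝ} {ψ2 : Z × Z × U → ℝ}
    (h1 : ∀ x', 0 ≤ ψ1 x') (h2 : ∀ s, 0 ≤ ψ2 s)
    (hN : ∀ b : Xo × U, 0 < ∑ x'', ψ1 x'' * ψ2 (Enc x'', Enc b.1, b.2))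
    (x' : Xo) (b : Xo × U) : qModel Enc ψ1 ψ2 x' b ≤ 1 := by
  rw [qModel, div_le_one (hN b)]
  exact Finset.single_le_sum (f := fun x'' => ψ1 x'' * ψ2 (Enc x'', Enc b.1, b.2))
    (fun x'' _ => mul_nonneg (h1 _) (h2 _)) (Finset.mem_univ x')

end L1

theorem lemma1_predictive_suboptimality_le_mi_gap
    [Nonempty Xo] [Nonempty U] [Nonempty Z]
    (p : Xo × Xo × U → ℝ) (hpos : ∀ t, 0 < p t) (hsum : ∑ t, p t = 1)
    (Enc : Xo → Z) :
    sInf {ℓ : ℝ | ∃ ψ1 : Xo → ℝ, ∃ ψ2 : Z × Z × U → ℝ,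
        (∀ x', 0 ≤ ψ1 x') ∧ (∀ zzu, 0 ≤ ψ2 zzu) ∧
        (∀ xu : Xo × U, 0 < ∑ x'', ψ1 x'' * ψ2 (Enc x'', Enc xu.1, xu.2)) ∧
        ℓ = predLoss p (qModel Enc ψ1 ψ2)}
      ≤ mi p - mi (pushEnc p Enc) := by
  have hp' : ∀ t, 0 ≤ p t := fun t => (hpos t).le
  have hbdd : BddBelow {ℓ : ℝ | ∃ ψ1 : Xo → ℝ, ∃ ψ2 : Z × Z × U → ℝ,
      (∀ x', 0 ≤ ψ1 x') ∧ (∀ zzu, 0 ≤ ψ2 zzu) ∧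
      (∀ xu : Xo × U, 0 < ∑ x'', ψ1 x'' * ψ2 (Enc x'', Enc xu.1, xu.2)) ∧
      ℓ = predLoss p (qModel Enc ψ1 ψ2)} := by
    refine ⟨-(Fintype.card Xo : ℝ), fun ℓ hℓ => ?_⟩
    obtain ⟨ψ1, ψ2, h1, h2, hN, rfl⟩ := hℓ
    exact L1.predLoss_lb hpos hsum _ (L1.qModel_nonneg h1 h2 hN)
      (L1.qModel_le_one h1 h2 hN)
  have hmem : predLoss p (qModel Enc (L1.pm p) (L1.psi2 p Enc)) ∈
      {ℓ : ℝ | ∃ ψ1 : Xo → ℝ, ∃ ψ2 : Z × Z × U → ℝ,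
      (∀ x', 0 ≤ ψ1 x') ∧ (∀ zzu, 0 ≤ ψ2 zzu) ∧
      (∀ xu : Xo × U, 0 < ∑ x'', ψ1 x'' * ψ2 (Enc x'', Enc xu.1, xu.2)) ∧
      ℓ = predLoss p (qModel Enc ψ1 ψ2)} := by
    refine ⟨L1.pm p, L1.psi2 p Enc,
      fun x' => (L1.pm_pos hpos x').le,
      fun s => L1.psi2_nonneg hp' s,
      fun b => ?_, rfl⟩
    rw [L1.norm_eq_one hpos b.1 b.2]
    exact one_pos
  have h := csInf_le hbdd hmem
  rwa [L1.predLoss_eq hpos] at h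

end
end
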